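/- Let n, k be positive integers with k ≤ n, let 𝔦 ⊂ {1,…,n} be an index set of cardinality k with complement 𝔦°, let A : ℝ → ℂ^{n×n} be continuous, and let S : ℝ → ℂ^{n×n} be differentiable with S'(x) = A(x)·S(x) and S(x₀) = I_n. Fix ŷ₀ ∈ ℂ^{(n−k)×k} and define, wherever the inverse exists, ŷ(x) := (S_{𝔦°,𝔦}(x) + S_{𝔦°,𝔦°}(x)·ŷ₀)·(S_{𝔦,𝔦}(x) + S_{𝔦,𝔦°}(x)·ŷ₀)^{−1}, where S_{𝔭,𝔮} denotes the 𝔭×𝔮 submatrix of S. Then on any open interval containing x₀ on which S_{𝔦,𝔦}(x) + S_{𝔦,𝔦°}(x)·ŷ₀ is invertible, ŷ is differentiable, satisfies ŷ(x₀) = ŷ₀, and satisfies the Riccati equation ŷ'(x) = c(x) + d(x)·ŷ(x) − ŷ(x)·a(x) − ŷ(x)·b(x)·ŷ(x), where a, b, c, d are the 𝔦×𝔦, 𝔦×𝔦°, 𝔦°×𝔦, 𝔦°×𝔦° submatrices of A. -/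

import Mathlib

open Matrix

/-- Entrywise derivative of a matrix-valued function of a real variable. -/
def MHasDerivAt {m k : Type*} (f : ℝ → Matrix m k ℂ) (f' : Matrix m k ℂ) (x : ℝ) : Prop :=
  ∀ i j, HasDerivAt (fun t => f t i j) (f' i j) x

/-- The order embedding of `Fin k` into `Fin n` enumerating a finset of cardinality `k`. -/
noncomputable def emb {n k : ℕ} (s : Finset (Fin n)) (h : s.card = k) : Fin k → Fin n :=
  fun i => (s.orderIsoOfFin h i : Fin n)

section Aux

theorem emb_mem {n k : ℕ} (s : Finset (Fin n)) (h : s.card = k) (i : Fin k) :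
    emb s h i ∈ s := (s.orderIsoOfFin h i).2

theorem emb_injective {n k : ℕ} (s : Finset (Fin n)) (h : s.card = k) :
    Function.Injective (emb s h) := fun i j hij => by
  have := Subtype.coe_injective hij
  exact (s.orderIsoOfFin h).injective this

theorem sum_emb_split {n k : ℕ} (𝔦 : Finset (Fin n)) (h𝔦 : 𝔦.card = k) (h𝔦c : 𝔦ᶜ.card = n - k)
    (g : Fin n → ℂ) :
    ∑ r, g r = (∑ i, g (emb 𝔦 h𝔦 i)) + ∑ j, g (emb 𝔦ᶜ h𝔦c j) := by
  rw [← Finset.sum_add_sum_compl 𝔦 g]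
  congr 1
  · rw [← Finset.sum_coe_sort 𝔦 g]
    exact (Equiv.sum_comp (𝔦.orderIsoOfFin h𝔦).toEquiv (fun x : 𝔦 => g x)).symm
  · rw [← Finset.sum_coe_sort 𝔦ᶜ g]
    exact (Equiv.sum_comp (𝔦ᶜ.orderIsoOfFin h𝔦c).toEquiv (fun x : (𝔦ᶜ : Finset (Fin n)) => g x)).symm

theorem submatrix_mul_split {n k a b : ℕ} (𝔦 : Finset (Fin n)) (h𝔦 : 𝔦.card = k)
    (h𝔦c : 𝔦ᶜ.card = n - k) (M N : Matrix (Fin n) (Fin n) ℂ)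
    (e₁ : Fin a → Fin n) (e₂ : Fin b → Fin n) :
    (M * N).submatrix e₁ e₂ =
      M.submatrix e₁ (emb 𝔦 h𝔦) * N.submatrix (emb 𝔦 h𝔦) e₂
        + M.submatrix e₁ (emb 𝔦ᶜ h𝔦c) * N.submatrix (emb 𝔦ᶜ h𝔦c) e₂ := by
  ext i j
  simp only [Matrix.submatrix_apply, Matrix.mul_apply, Matrix.add_apply]
  exact sum_emb_split 𝔦 h𝔦 h𝔦c (fun r => M (e₁ i) r * N r (e₂ j))

theorem MHasDerivAt.add' {m k : Type*} {f g : ℝ → Matrix m k ℂ} {f' g' : Matrix m k ℂ} {x : ℝ}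
    (hf : MHasDerivAt f f' x) (hg : MHasDerivAt g g' x) :
    MHasDerivAt (fun t => f t + g t) (f' + g') x := fun i j => by
  simpa [Matrix.add_apply] using (hf i j).fun_add (hg i j)

theorem MHasDerivAt.mul' {m p q : Type*} [Fintype p] {f : ℝ → Matrix m p ℂ}
    {g : ℝ → Matrix p q ℂ} {f' : Matrix m p ℂ} {g' : Matrix p q ℂ} {x : ℝ}
    (hf : MHasDerivAt f f' x) (hg : MHasDerivAt g g' x) :
    MHasDerivAt (fun t => f t * g t) (f' * g x + f x * g') x := fun i j => by
  have h : ∀ l ∈ Finset.univ, HasDerivAt (fun t => f t i l * g t l j)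
      (f' i l * g x l j + f x i l * g' l j) x := fun l _ => (hf i l).mul (hg l j)
  have := HasDerivAt.fun_sum h
  simpa [Matrix.mul_apply, Matrix.add_apply, Finset.sum_add_distrib] using this

theorem MHasDerivAt.mul_const' {m p q : Type*} [Fintype p] {f : ℝ → Matrix m p ℂ}
    {f' : Matrix m p ℂ} {x : ℝ} (hf : MHasDerivAt f f' x) (C : Matrix p q ℂ) :
    MHasDerivAt (fun t => f t * C) (f' * C) x := by
  have hc : MHasDerivAt (fun _ : ℝ => C) 0 x := fun i j => by
    simpa using hasDerivAt_const x (C i j)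
  simpa using hf.mul' hc

section Square

variable {k : ℕ}

attribute [local instance] Matrix.linftyOpNormedAddCommGroup Matrix.linftyOpNormedSpace
  Matrix.linftyOpNormedRing Matrix.linftyOpNormedAlgebra

noncomputable instance : CompleteSpace (Matrix (Fin k) (Fin k) ℂ) :=
  FiniteDimensional.complete ℝ _

/-- The entry projection as a linear map. -/
def entryLM (i j : Fin k) : Matrix (Fin k) (Fin k) ℂ →ₗ[ℝ] ℂ where
  toFun M := M i j
  map_add' _ _ := rfl
  map_smul' _ _ := rfl

theorem mhasDerivAt_iff {f : ℝ → Matrix (Fin k) (Fin k) ℂ} {f' : Matrix (Fin k) (Fin k) ℂ}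
    {x : ℝ} : MHasDerivAt f f' x ↔ HasDerivAt f f' x := by
  constructor
  · intro h
    have key : HasDerivAt (fun t => ∑ i, ∑ j, Matrix.single i j (f t i j))
        (∑ i, ∑ j, Matrix.single i j (f' i j)) x := by
      refine HasDerivAt.fun_sum fun i _ => HasDerivAt.fun_sum fun j _ => ?_
      have := (h i j).smul_const (Matrix.single i j (1 : ℂ))
      simpa [Matrix.smul_single] using this
    have e1 : (fun t => ∑ i, ∑ j, Matrix.single i j (f t i j)) = f := by
      funext t; exact (Matrix.matrix_eq_sum_single (f t)).symm
    rw [e1, ← Matrix.matrix_eq_sum_single] at key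
    exact key
  · intro h i j
    exact (LinearMap.toContinuousLinearMap (entryLM i j)).hasFDerivAt.comp_hasDerivAt x h

theorem MHasDerivAt.inv' {U : ℝ → Matrix (Fin k) (Fin k) ℂ} {U' : Matrix (Fin k) (Fin k) ℂ}
    {x : ℝ} (h : MHasDerivAt U U' x) (hu : IsUnit (U x)) :
    MHasDerivAt (fun t => (U t)⁻¹) (-((U x)⁻¹ * U' * (U x)⁻¹)) x := by
  rw [mhasDerivAt_iff] at h ⊢
  obtain ⟨u, hu'⟩ := hu
  have hinv := hasFDerivAt_ringInverse (𝕜 := ℝ) u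
  rw [hu'] at hinv
  have hc : HasDerivAt (fun t => Ring.inverse (U t))
      ((-ContinuousLinearMap.mulLeftRight ℝ _ (↑u⁻¹) (↑u⁻¹)) U') x :=
    hinv.comp_hasDerivAt x h
  have hcoe : (↑u⁻¹ : Matrix (Fin k) (Fin k) ℂ) = (U x)⁻¹ := by
    rw [Matrix.coe_units_inv, hu']
  simp only [ContinuousLinearMap.neg_apply, ContinuousLinearMap.mulLeftRight_apply, hcoe] at hc
  have e1 : (fun t => Ring.inverse (U t)) = fun t => (U t)⁻¹ := by
    funext t; exact (Matrix.nonsing_inv_eq_ringInverse (U t)).symm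
  rw [e1] at hc
  convert hc using 1

end Square

end Aux


theorem riccati_alg {k m : ℕ} (a : Matrix (Fin k) (Fin k) ℂ) (b : Matrix (Fin k) (Fin m) ℂ)
    (c : Matrix (Fin m) (Fin k) ℂ) (d : Matrix (Fin m) (Fin m) ℂ)
    (Ux W : Matrix (Fin k) (Fin k) ℂ) (Vx : Matrix (Fin m) (Fin k) ℂ) (hUW : Ux * W = 1) :
    c + d * (Vx * W) - (Vx * W) * a - (Vx * W) * b * (Vx * W)
      = (c * Ux + d * Vx) * W + Vx * (-(W * (a * Ux + b * Vx) * W)) := by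
  simp only [Matrix.mul_add, Matrix.add_mul, Matrix.mul_neg, Matrix.neg_mul,
    Matrix.mul_assoc, hUW, Matrix.mul_one, sub_eq_add_neg, neg_add]
  abel

/-- The Möbius (linear fractional) action of the fundamental solution `S` of
`S' = A(x)·S`, `S(x₀) = I` on Riccati initial data `ŷ₀`: on any open interval
containing `x₀` where `S_{𝔦,𝔦} + S_{𝔦,𝔦°}·ŷ₀` is invertible, the map
`ŷ = (S_{𝔦°,𝔦} + S_{𝔦°,𝔦°}·ŷ₀)·(S_{𝔦,𝔦} + S_{𝔦,𝔦°}·ŷ₀)⁻¹` is differentiable,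
equals `ŷ₀` at `x₀`, and satisfies the Riccati equation. -/
theorem mobius_action_solves_riccati
    (n k : ℕ) (hn : 0 < n) (hk : 0 < k) (hkn : k ≤ n)
    (𝔦 : Finset (Fin n)) (h𝔦 : 𝔦.card = k) (h𝔦c : 𝔦ᶜ.card = n - k)
    (A : ℝ → Matrix (Fin n) (Fin n) ℂ) (hA : Continuous A)
    (S : ℝ → Matrix (Fin n) (Fin n) ℂ) (x₀ : ℝ)
    (hS : ∀ x, MHasDerivAt S (A x * S x) x) (hS0 : S x₀ = 1)
    (yh₀ : Matrix (Fin (n - k)) (Fin k) ℂ) :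
    ∀ a b : ℝ, x₀ ∈ Set.Ioo a b →
      (∀ x ∈ Set.Ioo a b,
        IsUnit ((S x).submatrix (emb 𝔦 h𝔦) (emb 𝔦 h𝔦)
          + (S x).submatrix (emb 𝔦 h𝔦) (emb 𝔦ᶜ h𝔦c) * yh₀)) →
      (fun x => ((S x).submatrix (emb 𝔦ᶜ h𝔦c) (emb 𝔦 h𝔦)
            + (S x).submatrix (emb 𝔦ᶜ h𝔦c) (emb 𝔦ᶜ h𝔦c) * yh₀)
          * ((S x).submatrix (emb 𝔦 h𝔦) (emb 𝔦 h𝔦)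
            + (S x).submatrix (emb 𝔦 h𝔦) (emb 𝔦ᶜ h𝔦c) * yh₀)⁻¹) x₀ = yh₀ ∧
      ∀ x ∈ Set.Ioo a b,
        MHasDerivAt
          (fun t => ((S t).submatrix (emb 𝔦ᶜ h𝔦c) (emb 𝔦 h𝔦)
              + (S t).submatrix (emb 𝔦ᶜ h𝔦c) (emb 𝔦ᶜ h𝔦c) * yh₀)
            * ((S t).submatrix (emb 𝔦 h𝔦) (emb 𝔦 h𝔦)
              + (S t).submatrix (emb 𝔦 h𝔦) (emb 𝔦ᶜ h𝔦c) * yh₀)⁻¹)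
          (((A x).submatrix (emb 𝔦ᶜ h𝔦c) (emb 𝔦 h𝔦)
            + (A x).submatrix (emb 𝔦ᶜ h𝔦c) (emb 𝔦ᶜ h𝔦c)
              * (((S x).submatrix (emb 𝔦ᶜ h𝔦c) (emb 𝔦 h𝔦)
                  + (S x).submatrix (emb 𝔦ᶜ h𝔦c) (emb 𝔦ᶜ h𝔦c) * yh₀)
                * ((S x).submatrix (emb 𝔦 h𝔦) (emb 𝔦 h𝔦)
                  + (S x).submatrix (emb 𝔦 h𝔦) (emb 𝔦ᶜ h𝔦c) * yh₀)⁻¹))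
            - (((S x).submatrix (emb 𝔦ᶜ h𝔦c) (emb 𝔦 h𝔦)
                  + (S x).submatrix (emb 𝔦ᶜ h𝔦c) (emb 𝔦ᶜ h𝔦c) * yh₀)
                * ((S x).submatrix (emb 𝔦 h𝔦) (emb 𝔦 h𝔦)
                  + (S x).submatrix (emb 𝔦 h𝔦) (emb 𝔦ᶜ h𝔦c) * yh₀)⁻¹)
              * (A x).submatrix (emb 𝔦 h𝔦) (emb 𝔦 h𝔦)
            - (((S x).submatrix (emb 𝔦ᶜ h𝔦c) (emb 𝔦 h𝔦)
                  + (S x).submatrix (emb 𝔦ᶜ h𝔦c) (emb 𝔦ᶜ h𝔦c) * yh₀)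
                * ((S x).submatrix (emb 𝔦 h𝔦) (emb 𝔦 h𝔦)
                  + (S x).submatrix (emb 𝔦 h𝔦) (emb 𝔦ᶜ h𝔦c) * yh₀)⁻¹)
              * (A x).submatrix (emb 𝔦 h𝔦) (emb 𝔦ᶜ h𝔦c)
              * (((S x).submatrix (emb 𝔦ᶜ h𝔦c) (emb 𝔦 h𝔦)
                  + (S x).submatrix (emb 𝔦ᶜ h𝔦c) (emb 𝔦ᶜ h𝔦c) * yh₀)
                * ((S x).submatrix (emb 𝔦 h𝔦) (emb 𝔦 h𝔦)
                  + (S x).submatrix (emb 𝔦 h𝔦) (emb 𝔦ᶜ h𝔦c) * yh₀)⁻¹))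
          x := by
  intro lo hi hx₀ hunit
  set e : Fin k → Fin n := emb 𝔦 h𝔦 with he
  set ec : Fin (n - k) → Fin n := emb 𝔦ᶜ h𝔦c with hec
  set U : ℝ → Matrix (Fin k) (Fin k) ℂ :=
    fun t => (S t).submatrix e e + (S t).submatrix e ec * yh₀ with hU
  set V : ℝ → Matrix (Fin (n - k)) (Fin k) ℂ :=
    fun t => (S t).submatrix ec e + (S t).submatrix ec ec * yh₀ with hV
  -- submatrix derivatives
  have hsub : ∀ (x : ℝ) {a b : ℕ} (e₁ : Fin a → Fin n) (e₂ : Fin b → Fin n),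
      MHasDerivAt (fun t => (S t).submatrix e₁ e₂) ((A x * S x).submatrix e₁ e₂) x := by
    intro x a b e₁ e₂ i j
    exact hS x (e₁ i) (e₂ j)
  have hU' : ∀ x, MHasDerivAt U
      ((A x).submatrix e e * U x + (A x).submatrix e ec * V x) x := by
    intro x
    have h1 := (hsub x e e).add' ((hsub x e ec).mul_const' yh₀)
    convert h1 using 1
    rw [submatrix_mul_split 𝔦 h𝔦 h𝔦c, submatrix_mul_split 𝔦 h𝔦 h𝔦c]
    simp only [hU, hV, ← he, ← hec, Matrix.mul_add, Matrix.add_mul, Matrix.mul_assoc]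
    abel
  have hV' : ∀ x, MHasDerivAt V
      ((A x).submatrix ec e * U x + (A x).submatrix ec ec * V x) x := by
    intro x
    have h1 := (hsub x ec e).add' ((hsub x ec ec).mul_const' yh₀)
    convert h1 using 1
    rw [submatrix_mul_split 𝔦 h𝔦 h𝔦c, submatrix_mul_split 𝔦 h𝔦 h𝔦c]
    simp only [hU, hV, ← he, ← hec, Matrix.mul_add, Matrix.add_mul, Matrix.mul_assoc]
    abel
  constructor
  · -- value at x₀
    show V x₀ * (U x₀)⁻¹ = yh₀
    have hee : (S x₀).submatrix e e = 1 := by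
      rw [hS0]; exact Matrix.submatrix_one e (emb_injective 𝔦 h𝔦)
    have hecec : (S x₀).submatrix ec ec = 1 := by
      rw [hS0]; exact Matrix.submatrix_one ec (emb_injective 𝔦ᶜ h𝔦c)
    have heec : (S x₀).submatrix e ec = 0 := by
      rw [hS0]; ext i j
      have h1 : e i ∈ 𝔦 := emb_mem 𝔦 h𝔦 i
      have h2 : ec j ∈ 𝔦ᶜ := emb_mem 𝔦ᶜ h𝔦c j
      have : e i ≠ ec j := by
        intro hcon; rw [hcon] at h1; exact (Finset.mem_compl.mp h2) h1
      simp [Matrix.one_apply, this]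
    have hece : (S x₀).submatrix ec e = 0 := by
      rw [hS0]; ext i j
      have h1 : ec i ∈ 𝔦ᶜ := emb_mem 𝔦ᶜ h𝔦c i
      have h2 : e j ∈ 𝔦 := emb_mem 𝔦 h𝔦 j
      have : ec i ≠ e j := by
        intro hcon; rw [hcon] at h1; exact (Finset.mem_compl.mp h1) h2
      simp [Matrix.one_apply, this]
    simp [hU, hV, hee, hecec, heec, hece, inv_one]
  · -- the Riccati equation
    intro x hx
    have hu : IsUnit (U x) := hunit x hx
    have hdet : IsUnit (U x).det := (Matrix.isUnit_iff_isUnit_det (U x)).mp hu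
    have hUW : U x * (U x)⁻¹ = 1 := Matrix.mul_nonsing_inv (U x) hdet
    have hprod := (hV' x).mul' ((hU' x).inv' hu)
    show MHasDerivAt (fun t => V t * (U t)⁻¹) _ x
    have halg := riccati_alg ((A x).submatrix e e) ((A x).submatrix e ec)
      ((A x).submatrix ec e) ((A x).submatrix ec ec) (U x) ((U x)⁻¹) (V x) hUW
    rw [halg]
    exact hprod
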